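/- Let X be a real topological vector space, D ⊆ X a convex set, and F : D × D → ℝ a function satisfying property (F) with derivative family F'_u. Then the map E_F : D × D → X* defined by E_F(u,v) = −F'_u(v) is a generalized deviation function on D; that is, E_F(u,u) = 0 for all u ∈ D, and (E_F(u,v) − E_F(u,w))(v − w) < 0 for all u ∈ D and v, w ∈ D with v ≠ w. -/

import Mathlib

open Filter Topology

/-- Key lemma: for a strictly convex function, the one-sided directional derivative at `v`
in direction `w - v` is strictly below the secant slope `f w - f v` when `v ≠ w`. -/
lemma strict_slope_aux {X : Type*} [AddCommGroup X] [Module ℝ X]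
    {D : Set X} {f : X → ℝ} (hf : StrictConvexOn ℝ D f)
    {v w : X} (hv : v ∈ D) (hw : w ∈ D) (hvw : v ≠ w) {L : ℝ}
    (hL : Tendsto (fun t : ℝ => (f (v + t • (w - v)) - f v) / t) (𝓝[>] 0) (𝓝 L)) :
    L < f w - f v := by
  set m := v + (1/2 : ℝ) • (w - v) with hm
  have hmeq : m = (1/2 : ℝ) • v + (1/2 : ℝ) • w := by
    rw [hm]; module
  have hmD : m ∈ D := by
    rw [hmeq]
    exact hf.1 hv hw (by norm_num) (by norm_num) (by norm_num)
  have hmid : f m < (1/2) * f v + (1/2) * f w := by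
    have := hf.2 hv hw hvw (by norm_num : (0:ℝ) < 1/2) (by norm_num : (0:ℝ) < 1/2)
      (by norm_num)
    rw [hmeq]
    simpa [smul_eq_mul] using this
  have hLe : L ≤ 2 * (f m - f v) := by
    refine le_of_tendsto hL ?_
    filter_upwards [Ioo_mem_nhdsGT_of_mem (by norm_num : (0:ℝ) ∈ Set.Ico 0 (1/2))]
      with s hs
    obtain ⟨hs0, hs2⟩ := hs
    -- v + s • (w - v) = (1 - 2s) • v + (2s) • m
    have hcomb : v + s • (w - v) = (1 - 2*s) • v + (2*s) • m := by
      rw [hm]; module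
    have hconv : f (v + s • (w - v)) ≤ (1 - 2*s) * f v + (2*s) * f m := by
      rw [hcomb]
      have := hf.convexOn.2 hv hmD (show (0:ℝ) ≤ 1 - 2*s by linarith)
        (show (0:ℝ) ≤ 2*s by linarith) (show (1 - 2*s) + 2*s = 1 by ring)
      simpa [smul_eq_mul] using this
    rw [div_le_iff₀ hs0]
    nlinarith
  have : 2 * (f m - f v) < f w - f v := by linarith
  linarith

/-- If `F : D × D → ℝ` satisfies property (F) with derivative family `F'_u`,
then `E_F(u,v) := −F'_u(v)` is a generalized deviation function on `D`. -/
theorem propertyF_gives_generalized_deviation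
    {X : Type*} [AddCommGroup X] [Module ℝ X] [TopologicalSpace X]
    [IsTopologicalAddGroup X] [ContinuousSMul ℝ X]
    (D : Set X) (hDconv : Convex ℝ D)
    (F : X → X → ℝ) (F' : X → X → X →L[ℝ] ℝ)
    (hFconv : ∀ u ∈ D, StrictConvexOn ℝ D (F u))
    (hFgateaux : ∀ u ∈ D, ∀ v ∈ D, ∀ w ∈ D,
      Tendsto (fun t : ℝ => (F u (v + t • (w - v)) - F u v) / t) (𝓝[>] 0)
        (𝓝 (F' u v (w - v))))
    (hF'0 : ∀ u ∈ D, F' u u = 0) :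
    (∀ u ∈ D, -F' u u = (0 : X →L[ℝ] ℝ)) ∧
    (∀ u ∈ D, ∀ v ∈ D, ∀ w ∈ D, v ≠ w → (-F' u v - -F' u w) (v - w) < 0) := by
  constructor
  · intro u hu; rw [hF'0 u hu]; simp
  · intro u hu v hv w hw hvw
    have h1 : F' u v (w - v) < F u w - F u v :=
      strict_slope_aux (hFconv u hu) hv hw hvw (hFgateaux u hu v hv w hw)
    have h2 : F' u w (v - w) < F u v - F u w :=
      strict_slope_aux (hFconv u hu) hw hv (Ne.symm hvw) (hFgateaux u hu w hw v hv)
    have hnegv : F' u v (v - w) = -(F' u v (w - v)) := by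
      rw [← map_neg]; congr 1; abel
    simp only [ContinuousLinearMap.sub_apply, ContinuousLinearMap.neg_apply]
    rw [hnegv]
    linarith
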